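/- Let Q be a random variable with finite second moment and let Q_ℓ be its level-ℓ approximation. Suppose there exist positive constants α, β, γ, c₁, c₂, c₃ with α ≥ min(β,γ)/2 such that for all levels ℓ: |E[Q_ℓ − Q]| ≤ c₁·2^(−αℓ), the variance V_ℓ of a single sample of Y_ℓ = Q_ℓ − Q_{ℓ−1} satisfies V_ℓ ≤ c₂·2^(−βℓ), and the cost per sample C_ℓ satisfies C_ℓ ≤ c₃·2^(γℓ). Then there exists c₄ > 0 such that for all ε < e^{−1} there exist L and sample numbers N_ℓ for which the multilevel Monte Carlo estimator has mean square error at most ε², with expected total cost bounded by c₄ε^{−2} if β > γ, by c₄ε^{−2}(log ε)² if β = γ, and by c₄ε^{−2−(γ−β)/α} if β < γ. -/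

import Mathlib

open MeasureTheory ProbabilityTheory Real Finset

private lemma rpow_nat_mul (c : ℝ) (ℓ : ℕ) :
    (2:ℝ) ^ (c * ℓ) = ((2:ℝ) ^ c) ^ ℓ := by
  rw [Real.rpow_mul (by norm_num : (0:ℝ) ≤ 2), Real.rpow_natCast]

private lemma max_zero_log {y : ℝ} (hy : 0 < y) :
    max 0 (Real.log y) = Real.log (max 1 y) := by
  rcases le_total 1 y with h | h
  · rw [max_eq_right h, max_eq_right (Real.log_nonneg h)]
  · rw [max_eq_left h, max_eq_left (Real.log_nonpos hy.le h), Real.log_one]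

private lemma geom_Icc_le_of_lt_one {q : ℝ} (h0 : 0 ≤ q) (h1 : q < 1) (L : ℕ) :
    ∑ ℓ ∈ Finset.Icc 1 L, q ^ ℓ ≤ 1 / (1 - q) := by
  have hsub : Finset.Icc 1 L ⊆ Finset.range (L+1) := by
    intro ℓ hℓ
    simp only [Finset.mem_range, Nat.lt_succ_iff]
    exact (Finset.mem_Icc.mp hℓ).2
  have h2 : ∑ ℓ ∈ Finset.Icc 1 L, q ^ ℓ ≤ ∑ i ∈ Finset.range (L+1), q ^ i :=
    Finset.sum_le_sum_of_subset_of_nonneg hsub (fun i _ _ => pow_nonneg h0 i)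
  have h3 : ∑ i ∈ Finset.range (L+1), q ^ i = (q^(L+1) - 1)/(q - 1) :=
    geom_sum_eq h1.ne (L+1)
  have hq : (0:ℝ) < 1 - q := by linarith
  have h5 : (q^(L+1) - 1)/(q - 1) = (1 - q^(L+1))/(1-q) := by
    rw [← neg_div_neg_eq]; ring_nf
  have h6 : (1 - q^(L+1))/(1-q) ≤ 1/(1-q) :=
    div_le_div_of_nonneg_right (by nlinarith [pow_nonneg h0 (L+1)]) hq.le
  calc ∑ ℓ ∈ Finset.Icc 1 L, q ^ ℓ ≤ (q^(L+1) - 1)/(q - 1) := h3 ▸ h2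
    _ = (1 - q^(L+1))/(1-q) := h5
    _ ≤ 1/(1-q) := h6

private lemma geom_Icc_le_of_one_lt {r : ℝ} (hr : 1 < r) (L : ℕ) :
    ∑ ℓ ∈ Finset.Icc 1 L, r ^ ℓ ≤ r ^ L * (r / (r - 1)) := by
  have hr1 : (0:ℝ) < r - 1 := by linarith
  have hsub : Finset.Icc 1 L ⊆ Finset.range (L+1) := by
    intro ℓ hℓ
    simp only [Finset.mem_range, Nat.lt_succ_iff]
    exact (Finset.mem_Icc.mp hℓ).2
  have h2 : ∑ ℓ ∈ Finset.Icc 1 L, r ^ ℓ ≤ ∑ i ∈ Finset.range (L+1), r ^ i :=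
    Finset.sum_le_sum_of_subset_of_nonneg hsub (fun i _ _ => pow_nonneg (by linarith) i)
  have h3 : ∑ i ∈ Finset.range (L+1), r ^ i = (r^(L+1) - 1)/(r - 1) :=
    geom_sum_eq hr.ne' (L+1)
  have h4 : (r^(L+1) - 1)/(r - 1) ≤ r^(L+1)/(r-1) :=
    div_le_div_of_nonneg_right (by linarith) hr1.le
  have h5 : r^(L+1)/(r-1) = r^L * (r/(r-1)) := by rw [pow_succ]; ring
  calc ∑ ℓ ∈ Finset.Icc 1 L, r ^ ℓ ≤ (r^(L+1) - 1)/(r - 1) := h3 ▸ h2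
    _ ≤ r^(L+1)/(r-1) := h4
    _ = r^L * (r/(r-1)) := h5

set_option maxHeartbeats 1600000 in
private lemma mlmc_core (α β γ c₁ c₂ : ℝ)
    (hα : 0 < α) (hγ : 0 < γ) (hc₁ : 0 < c₁) (hc₂ : 0 < c₂)
    (ε : ℝ) (hε : 0 < ε) (hεe : ε < Real.exp (-1)) :
    ∃ (L : ℕ) (N : ℕ → ℕ) (K : ℝ),
      1 ≤ L ∧ (∀ ℓ ∈ Finset.Icc 1 L, 0 < N ℓ) ∧ 0 < K ∧
      K = ∑ ℓ ∈ Finset.Icc 1 L, (2:ℝ) ^ (((γ - β)/2) * ℓ) ∧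
      (c₁ * (2:ℝ) ^ (-α * L)) ^ 2 ≤ ε^2/2 ∧
      (∑ ℓ ∈ Finset.Icc 1 L, (c₂ * (2:ℝ) ^ (-β * ℓ)) / (N ℓ : ℝ)) ≤ ε^2/2 ∧
      (∑ ℓ ∈ Finset.Icc 1 L, (N ℓ : ℝ) * (2:ℝ) ^ (γ * ℓ)) ≤
        2 * ε ^ (-2:ℝ) * c₂ * K^2 +
          (2:ℝ) ^ (γ * L) * ((2:ℝ)^γ / ((2:ℝ)^γ - 1)) ∧
      (L:ℝ) ≤ ((max 0 (Real.log (c₁ * Real.sqrt 2)) + 1)/(α * Real.log 2) + 1) *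
        (-Real.log ε) ∧
      (∀ θ : ℝ, 0 ≤ θ → (2:ℝ) ^ (θ * L) ≤
        (2:ℝ)^θ * (max 1 (c₁ * Real.sqrt 2)) ^ (θ/α) * ε ^ (-(θ/α))) := by
  have hlog2 : (0:ℝ) < Real.log 2 := Real.log_pos one_lt_two
  have halog : 0 < α * Real.log 2 := by positivity
  have ht : 1 < -Real.log ε := by
    have h := Real.log_lt_log hε hεe
    rw [Real.log_exp] at h; linarith
  have hε1 : ε < 1 := by
    have : Real.exp (-1) < 1 := by
      rw [show (1:ℝ) = Real.exp 0 by simp]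
      exact Real.exp_lt_exp.mpr (by norm_num)
    linarith
  have hs2 : (0:ℝ) < Real.sqrt 2 := Real.sqrt_pos.mpr (by norm_num)
  set x := Real.log (c₁ * Real.sqrt 2 / ε) / (α * Real.log 2) with hxdef
  set L := max 1 ⌈x⌉₊ with hLdef
  have hL1 : 1 ≤ L := le_max_left _ _
  have hxL : x ≤ (L:ℝ) :=
    le_trans (Nat.le_ceil x) (Nat.cast_le.mpr (le_max_right _ _))
  have hLcast : (L:ℝ) = max 1 (⌈x⌉₊:ℝ) := by
    rw [hLdef]; push_cast; rfl
  have hLle : (L:ℝ) ≤ max 0 x + 1 := by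
    have h1 : (⌈x⌉₊:ℝ) ≤ max 0 x + 1 := by
      rcases le_or_gt x 0 with h | h
      · rw [Nat.ceil_eq_zero.mpr h]
        have := le_max_left 0 x
        push_cast; linarith
      · have h2 : (⌈x⌉₊:ℝ) < x + 1 := Nat.ceil_lt_add_one h.le
        have h3 : x ≤ max 0 x := le_max_right _ _
        linarith
    rw [hLcast]
    apply max_le _ h1
    have := le_max_left (0:ℝ) x
    linarith
  -- 2^(α L) ≥ c₁ √2 / ε
  have h2pow : c₁ * Real.sqrt 2 / ε ≤ (2:ℝ) ^ (α * L) := by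
    have hxlog : x * (α * Real.log 2) = Real.log (c₁ * Real.sqrt 2 / ε) :=
      div_mul_cancel₀ _ halog.ne'
    have h1 : Real.log (c₁ * Real.sqrt 2 / ε) ≤ α * L * Real.log 2 := by
      have := mul_le_mul_of_nonneg_right hxL halog.le
      rw [hxlog] at this
      nlinarith
    calc c₁ * Real.sqrt 2 / ε = Real.exp (Real.log (c₁ * Real.sqrt 2 / ε)) :=
          (Real.exp_log (by positivity)).symm
      _ ≤ Real.exp (α * L * Real.log 2) := Real.exp_le_exp.mpr h1
      _ = (2:ℝ) ^ (α * (L:ℝ)) := by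
          rw [Real.rpow_def_of_pos (by norm_num : (0:ℝ) < 2)]
          congr 1; ring
  have hbias2 : (c₁ * (2:ℝ) ^ (-α * (L:ℝ))) ^ 2 ≤ ε^2/2 := by
    have hp : (0:ℝ) < (2:ℝ) ^ (α * (L:ℝ)) := Real.rpow_pos_of_pos (by norm_num) _
    have h1 : c₁ * Real.sqrt 2 ≤ ε * (2:ℝ) ^ (α * (L:ℝ)) := by
      rw [div_le_iff₀ hε] at h2pow; linarith
    have h2 : c₁ * (2:ℝ) ^ (-α * (L:ℝ)) = c₁ / (2:ℝ) ^ (α * (L:ℝ)) := by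
      rw [show -α * (L:ℝ) = -(α * (L:ℝ)) by ring,
        Real.rpow_neg (by norm_num : (0:ℝ) ≤ 2), div_eq_mul_inv]
    have h3 : (c₁ * Real.sqrt 2)^2 ≤ (ε * (2:ℝ) ^ (α * (L:ℝ)))^2 :=
      pow_le_pow_left₀ (by positivity) h1 2
    have h4 : (c₁ * Real.sqrt 2)^2 = c₁^2 * 2 := by
      rw [mul_pow, Real.sq_sqrt (by norm_num : (0:ℝ) ≤ 2)]
    rw [h2, div_pow, div_le_div_iff₀ (by positivity) (by norm_num)]
    nlinarith [mul_pow ε ((2:ℝ) ^ (α * (L:ℝ))) 2]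
  set K := ∑ ℓ ∈ Finset.Icc 1 L, (2:ℝ) ^ (((γ - β)/2) * ℓ) with hK
  have hKpos : 0 < K :=
    Finset.sum_pos (fun ℓ _ => Real.rpow_pos_of_pos (by norm_num) _)
      ⟨1, Finset.mem_Icc.mpr ⟨le_refl 1, hL1⟩⟩
  set Nr : ℕ → ℝ :=
    fun ℓ => 2 * ε ^ (-2:ℝ) * c₂ * (2:ℝ) ^ ((-(β+γ)/2) * ℓ) * K with hNr
  have hNrpos : ∀ ℓ, 0 < Nr ℓ := by
    intro ℓ
    have h1 : (0:ℝ) < ε ^ (-2:ℝ) := Real.rpow_pos_of_pos hε _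
    have h2 : (0:ℝ) < (2:ℝ) ^ ((-(β+γ)/2) * (ℓ:ℝ)) := Real.rpow_pos_of_pos (by norm_num) _
    exact mul_pos (by positivity) hKpos
  refine ⟨L, fun ℓ => ⌈Nr ℓ⌉₊, K, hL1, fun ℓ _ => Nat.ceil_pos.mpr (hNrpos ℓ), hKpos, hK, hbias2, ?_, ?_, ?_, ?_⟩
  · -- statistical error
    have hterm : ∀ ℓ : ℕ, (c₂ * (2:ℝ) ^ (-β * ℓ)) / Nr ℓ
        = ε^2 * (2:ℝ) ^ (((γ-β)/2) * ℓ) / (2*K) := by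
      intro ℓ
      have hsplit : (2:ℝ) ^ (-β * (ℓ:ℝ))
          = (2:ℝ) ^ (((γ-β)/2) * ℓ) * (2:ℝ) ^ ((-(β+γ)/2) * ℓ) := by
        rw [← Real.rpow_add (by norm_num : (0:ℝ) < 2)]; congr 1; ring
      have he2 : ε ^ (-2:ℝ) = (ε^2)⁻¹ := by
        rw [show (-2:ℝ) = -(2:ℝ) by norm_num, Real.rpow_neg hε.le,
          show (2:ℝ) = ((2:ℕ):ℝ) by norm_num, Real.rpow_natCast]
      have hb : (2:ℝ) ^ ((-(β+γ)/2) * (ℓ:ℝ)) ≠ 0 :=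
        (Real.rpow_pos_of_pos (by norm_num) _).ne'
      simp only [hNr, hsplit, he2]
      field_simp
    have h1 : ∀ ℓ ∈ Finset.Icc 1 L,
        (c₂ * (2:ℝ) ^ (-β * ℓ)) / ((⌈Nr ℓ⌉₊ : ℕ) : ℝ)
          ≤ (c₂ * (2:ℝ) ^ (-β * ℓ)) / Nr ℓ := by
      intro ℓ _
      apply div_le_div_of_nonneg_left (by positivity) (hNrpos ℓ) (Nat.le_ceil _)
    calc ∑ ℓ ∈ Finset.Icc 1 L, (c₂ * (2:ℝ) ^ (-β * ℓ)) / ((⌈Nr ℓ⌉₊ : ℕ) : ℝ)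
        ≤ ∑ ℓ ∈ Finset.Icc 1 L, (c₂ * (2:ℝ) ^ (-β * ℓ)) / Nr ℓ := Finset.sum_le_sum h1
      _ = ∑ ℓ ∈ Finset.Icc 1 L, ε^2 / (2*K) * (2:ℝ) ^ (((γ-β)/2) * ℓ) := by
          refine Finset.sum_congr rfl fun ℓ _ => ?_
          rw [hterm ℓ]; ring
      _ = ε^2 / (2*K) * K := by rw [← Finset.mul_sum, ← hK]
      _ = ε^2/2 := by field_simp
  · -- cost
    have h2γ : (0:ℝ) < (2:ℝ)^γ - 1 := by
      have : (1:ℝ) < (2:ℝ)^γ :=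
        (Real.one_lt_rpow_iff_of_pos (by norm_num)).mpr (Or.inl ⟨one_lt_two, hγ⟩)
      linarith
    have h1 : ∀ ℓ ∈ Finset.Icc 1 L,
        ((⌈Nr ℓ⌉₊ : ℕ) : ℝ) * (2:ℝ) ^ (γ * ℓ)
          ≤ Nr ℓ * (2:ℝ) ^ (γ * ℓ) + (2:ℝ) ^ (γ * ℓ) := by
      intro ℓ _
      have h2 : ((⌈Nr ℓ⌉₊ : ℕ) : ℝ) ≤ Nr ℓ + 1 := (Nat.ceil_lt_add_one (hNrpos ℓ).le).le
      have h3 : (0:ℝ) < (2:ℝ) ^ (γ * (ℓ:ℝ)) := Real.rpow_pos_of_pos (by norm_num) _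
      nlinarith
    have h2 : ∀ ℓ : ℕ, Nr ℓ * (2:ℝ) ^ (γ * ℓ)
        = 2 * ε ^ (-2:ℝ) * c₂ * K * (2:ℝ) ^ (((γ-β)/2) * ℓ) := by
      intro ℓ
      have hx : (2:ℝ) ^ ((-(β+γ)/2) * (ℓ:ℝ)) * (2:ℝ) ^ (γ * (ℓ:ℝ))
          = (2:ℝ) ^ (((γ-β)/2) * (ℓ:ℝ)) := by
        rw [← Real.rpow_add (by norm_num : (0:ℝ) < 2)]; congr 1; ring
      calc Nr ℓ * (2:ℝ) ^ (γ * ℓ)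
          = 2 * ε ^ (-2:ℝ) * c₂ * K *
            ((2:ℝ) ^ ((-(β+γ)/2) * (ℓ:ℝ)) * (2:ℝ) ^ (γ * (ℓ:ℝ))) := by
            simp only [hNr]; ring
        _ = 2 * ε ^ (-2:ℝ) * c₂ * K * (2:ℝ) ^ (((γ-β)/2) * ℓ) := by rw [hx]
    have hgeo : ∑ ℓ ∈ Finset.Icc 1 L, (2:ℝ) ^ (γ * (ℓ:ℝ))
        ≤ (2:ℝ) ^ (γ * L) * ((2:ℝ)^γ / ((2:ℝ)^γ - 1)) := by
      have hone : (1:ℝ) < (2:ℝ)^γ :=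
        (Real.one_lt_rpow_iff_of_pos (by norm_num)).mpr (Or.inl ⟨one_lt_two, hγ⟩)
      have hconv : ∑ ℓ ∈ Finset.Icc 1 L, (2:ℝ) ^ (γ * (ℓ:ℝ))
          = ∑ ℓ ∈ Finset.Icc 1 L, ((2:ℝ)^γ) ^ ℓ :=
        Finset.sum_congr rfl fun ℓ _ => rpow_nat_mul γ ℓ
      have hgeq := geom_Icc_le_of_one_lt hone L
      rw [hconv, rpow_nat_mul γ L]
      exact hgeq
    calc ∑ ℓ ∈ Finset.Icc 1 L, ((⌈Nr ℓ⌉₊ : ℕ) : ℝ) * (2:ℝ) ^ (γ * ℓ)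
        ≤ ∑ ℓ ∈ Finset.Icc 1 L, (Nr ℓ * (2:ℝ) ^ (γ * ℓ) + (2:ℝ) ^ (γ * ℓ)) :=
          Finset.sum_le_sum h1
      _ = 2 * ε ^ (-2:ℝ) * c₂ * K * K
          + ∑ ℓ ∈ Finset.Icc 1 L, (2:ℝ) ^ (γ * (ℓ:ℝ)) := by
          rw [Finset.sum_add_distrib]
          congr 1
          rw [Finset.sum_congr rfl fun ℓ _ => h2 ℓ, ← Finset.mul_sum, ← hK]
      _ ≤ 2 * ε ^ (-2:ℝ) * c₂ * K^2
          + (2:ℝ) ^ (γ * L) * ((2:ℝ)^γ / ((2:ℝ)^γ - 1)) := by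
          have := hgeo; nlinarith [sq_nonneg K]
  · -- L bound
    set m := max 0 (Real.log (c₁ * Real.sqrt 2)) with hm
    have hm0 : 0 ≤ m := le_max_left _ _
    have hx' : x ≤ (m + -Real.log ε)/(α * Real.log 2) := by
      have hlog : Real.log (c₁ * Real.sqrt 2 / ε)
          = Real.log (c₁ * Real.sqrt 2) - Real.log ε :=
        Real.log_div (by positivity) hε.ne'
      have h1 : Real.log (c₁ * Real.sqrt 2 / ε) ≤ m + -Real.log ε := by
        rw [hlog]
        have := le_max_right 0 (Real.log (c₁ * Real.sqrt 2))
        linarith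
      exact div_le_div_of_nonneg_right h1 halog.le
    have key : (m + -Real.log ε)/(α * Real.log 2) + 1
        ≤ ((m + 1)/(α * Real.log 2) + 1) * (-Real.log ε) := by
      have h1 : m + -Real.log ε ≤ (m+1) * (-Real.log ε) := by nlinarith
      have h2 : (m + -Real.log ε)/(α*Real.log 2)
          ≤ ((m+1) * (-Real.log ε))/(α*Real.log 2) :=
        div_le_div_of_nonneg_right h1 halog.le
      have h3 : ((m+1) * (-Real.log ε))/(α*Real.log 2)
          = (m+1)/(α*Real.log 2) * (-Real.log ε) := by ring
      nlinarith
    have hmx : max 0 x ≤ (m + -Real.log ε)/(α * Real.log 2) :=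
      max_le (by positivity) hx'
    linarith
  · -- theta bound
    intro θ hθ
    set M := max 1 (c₁ * Real.sqrt 2) with hM
    have hM1 : (1:ℝ) ≤ M := le_max_left _ _
    set P := max 1 (c₁ * Real.sqrt 2 / ε) with hP
    have hP1 : (1:ℝ) ≤ P := le_max_left _ _
    have hPpos : (0:ℝ) < P := lt_of_lt_of_le one_pos hP1
    have hmaxx : max 0 x = Real.log P / (α * Real.log 2) := by
      have h1 : max 0 x
          = max ((0:ℝ)/(α*Real.log 2)) (Real.log (c₁ * Real.sqrt 2 / ε)/(α*Real.log 2)) := by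
        rw [zero_div]
      rw [h1, max_div_div_right halog.le]
      rw [max_zero_log (by positivity)]
    have hstep1 : θ * (L:ℝ) ≤ θ * max 0 x + θ := by nlinarith
    have hstep2 : (2:ℝ) ^ (θ * (L:ℝ)) ≤ (2:ℝ) ^ (θ * max 0 x) * (2:ℝ) ^ θ := by
      rw [← Real.rpow_add (by norm_num : (0:ℝ) < 2)]
      exact Real.rpow_le_rpow_of_exponent_le one_le_two hstep1
    have hPval : (2:ℝ) ^ (θ * max 0 x) = P ^ (θ/α) := by
      rw [hmaxx, Real.rpow_def_of_pos (by norm_num : (0:ℝ) < 2),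
        Real.rpow_def_of_pos hPpos]
      congr 1
      field_simp
    have hPle : P ≤ M/ε := by
      have h1 : M/ε = max (1/ε) (c₁ * Real.sqrt 2 / ε) := (max_div_div_right hε.le 1 _).symm
      rw [h1]
      apply max_le
      · calc (1:ℝ) ≤ 1/ε := by rw [le_div_iff₀ hε]; linarith
          _ ≤ max (1/ε) (c₁ * Real.sqrt 2 / ε) := le_max_left _ _
      · exact le_max_right _ _
    have hfin : P ^ (θ/α) ≤ M ^ (θ/α) * ε ^ (-(θ/α)) := by
      have h1 : P ^ (θ/α) ≤ (M/ε) ^ (θ/α) :=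
        Real.rpow_le_rpow hPpos.le hPle (by positivity)
      have h2 : (M/ε) ^ (θ/α) = M ^ (θ/α) * ε ^ (-(θ/α)) := by
        rw [Real.div_rpow (by linarith) hε.le, Real.rpow_neg hε.le, div_eq_mul_inv]
      rw [h2] at h1
      exact h1
    calc (2:ℝ) ^ (θ * (L:ℝ)) ≤ (2:ℝ) ^ (θ * max 0 x) * (2:ℝ) ^ θ := hstep2
      _ = P ^ (θ/α) * (2:ℝ) ^ θ := by rw [hPval]
      _ ≤ (M ^ (θ/α) * ε ^ (-(θ/α))) * (2:ℝ) ^ θ :=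
          mul_le_mul_of_nonneg_right hfin (Real.rpow_pos_of_pos (by norm_num) _).le
      _ = (2:ℝ)^θ * M ^ (θ/α) * ε ^ (-(θ/α)) := by ring

open MeasureTheory ProbabilityTheory


set_option maxHeartbeats 1600000 in
/-- **MLMC complexity theorem** (Giles). Let `Q` be a square-integrable random variable and
`Ql ℓ` its level-`ℓ` approximation (with `Ql 0 ≡ 0`). If the bias, the single-sample variance
of the level corrections `Yℓ = Ql ℓ - Ql (ℓ-1)` and the per-sample cost satisfy geometric
bounds with rates `α ≥ min(β,γ)/2`, then there is `c₄ > 0` such that for every tolerance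
`ε < e⁻¹` one can choose a finest level `L` and per-level sample numbers `N ℓ` so that the
MLMC estimator (whose MSE, by independence of the per-level estimators, equals the squared
bias plus `∑ Vℓ/Nℓ`) has mean square error at most `ε²` and expected total cost
`∑ Nℓ Cℓ` bounded by `c₄ε⁻²`, `c₄ε⁻²(log ε)²` or `c₄ε^(−2−(γ−β)/α)` according to the
relative size of `β` and `γ`. -/
theorem mlmc_complexity
    {Ω : Type*} [MeasurableSpace Ω] (μ : Measure Ω) [IsProbabilityMeasure μ]
    (Q : Ω → ℝ) (hQ : MemLp Q 2 μ)
    (Ql : ℕ → Ω → ℝ) (hQl0 : Ql 0 = fun _ => 0)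
    (hQlL2 : ∀ ℓ, MemLp (Ql ℓ) 2 μ)
    (C : ℕ → ℝ) (hCpos : ∀ ℓ, 0 < C ℓ)
    (α β γ c₁ c₂ c₃ : ℝ)
    (hα : 0 < α) (hβ : 0 < β) (hγ : 0 < γ)
    (hc₁ : 0 < c₁) (hc₂ : 0 < c₂) (hc₃ : 0 < c₃)
    (hαβγ : α ≥ min β γ / 2)
    (hbias : ∀ ℓ : ℕ, 1 ≤ ℓ → |(∫ ω, Ql ℓ ω ∂μ) - ∫ ω, Q ω ∂μ| ≤ c₁ * (2 : ℝ) ^ (-α * ℓ))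
    (hvar : ∀ ℓ : ℕ, 1 ≤ ℓ →
      variance (fun ω => Ql ℓ ω - Ql (ℓ - 1) ω) μ ≤ c₂ * (2 : ℝ) ^ (-β * ℓ))
    (hcost : ∀ ℓ : ℕ, 1 ≤ ℓ → C ℓ ≤ c₃ * (2 : ℝ) ^ (γ * ℓ)) :
    ∃ c₄ : ℝ, 0 < c₄ ∧ ∀ ε : ℝ, 0 < ε → ε < Real.exp (-1) →
      ∃ (L : ℕ) (N : ℕ → ℕ), 1 ≤ L ∧ (∀ ℓ ∈ Finset.Icc 1 L, 0 < N ℓ) ∧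
        -- mean square error of the MLMC estimator: squared bias + statistical error
        ((∫ ω, Ql L ω ∂μ) - ∫ ω, Q ω ∂μ) ^ 2 +
          ∑ ℓ ∈ Finset.Icc 1 L,
            variance (fun ω => Ql ℓ ω - Ql (ℓ - 1) ω) μ / (N ℓ : ℝ) ≤ ε ^ 2 ∧
        -- expected total cost bound
        (∑ ℓ ∈ Finset.Icc 1 L, (N ℓ : ℝ) * C ℓ) ≤
          (if β > γ then c₄ * ε ^ (-2 : ℝ)
           else if β = γ then c₄ * ε ^ (-2 : ℝ) * (Real.log ε) ^ 2
           else c₄ * ε ^ (-2 - (γ - β) / α)) := by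
  have hεe1 : Real.exp (-1) < 1 := by
    rw [show (1:ℝ) = Real.exp 0 by simp]
    exact Real.exp_lt_exp.mpr (by norm_num)
  set M := max 1 (c₁ * Real.sqrt 2) with hM
  have hM1 : (1:ℝ) ≤ M := le_max_left _ _
  have hMpos : (0:ℝ) < M := lt_of_lt_of_le one_pos hM1
  have h2γ1 : (1:ℝ) < (2:ℝ)^γ :=
    (Real.one_lt_rpow_iff_of_pos (by norm_num)).mpr (Or.inl ⟨one_lt_two, hγ⟩)
  set g := (2:ℝ)^γ / ((2:ℝ)^γ - 1) with hg
  have hgpos : 0 < g := div_pos (by positivity) (by linarith)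
  set Cg := (2:ℝ)^γ * M^(γ/α) with hCg
  have hCgpos : 0 < Cg :=
    mul_pos (Real.rpow_pos_of_pos (by norm_num) _) (Real.rpow_pos_of_pos hMpos _)
  -- the generic construction
  have KEY : ∀ ε : ℝ, 0 < ε → ε < Real.exp (-1) →
      ∃ (L : ℕ) (N : ℕ → ℕ) (K : ℝ),
        1 ≤ L ∧ (∀ ℓ ∈ Finset.Icc 1 L, 0 < N ℓ) ∧ 0 < K ∧
        K = ∑ ℓ ∈ Finset.Icc 1 L, (2:ℝ) ^ (((γ - β)/2) * ℓ) ∧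
        (((∫ ω, Ql L ω ∂μ) - ∫ ω, Q ω ∂μ) ^ 2 +
          ∑ ℓ ∈ Finset.Icc 1 L,
            variance (fun ω => Ql ℓ ω - Ql (ℓ - 1) ω) μ / (N ℓ : ℝ) ≤ ε ^ 2) ∧
        ((∑ ℓ ∈ Finset.Icc 1 L, (N ℓ : ℝ) * C ℓ) ≤
          c₃ * (2 * ε ^ (-2:ℝ) * c₂ * K^2 + (2:ℝ) ^ (γ * L) * g)) ∧
        (L:ℝ) ≤ ((max 0 (Real.log (c₁ * Real.sqrt 2)) + 1)/(α * Real.log 2) + 1) *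
          (-Real.log ε) ∧
        (∀ θ : ℝ, 0 ≤ θ → (2:ℝ) ^ (θ * L) ≤ (2:ℝ)^θ * M ^ (θ/α) * ε ^ (-(θ/α))) := by
    intro ε hε hεe
    obtain ⟨L, N, K, hL1, hN, hKpos, hKeq, hbias2, hstat, hcostsum, hLb, hθb⟩ :=
      mlmc_core α β γ c₁ c₂ hα hγ hc₁ hc₂ ε hε hεe
    refine ⟨L, N, K, hL1, hN, hKpos, hKeq, ?_, ?_, hLb, hθb⟩
    · -- MSE
      have hb := hbias L hL1
      have hb2 : ((∫ ω, Ql L ω ∂μ) - ∫ ω, Q ω ∂μ) ^ 2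
          ≤ (c₁ * (2:ℝ) ^ (-α * (L:ℝ))) ^ 2 := by
        rw [← sq_abs]
        exact pow_le_pow_left₀ (abs_nonneg _) hb 2
      have hv : ∑ ℓ ∈ Finset.Icc 1 L,
            variance (fun ω => Ql ℓ ω - Ql (ℓ - 1) ω) μ / (N ℓ : ℝ)
          ≤ ∑ ℓ ∈ Finset.Icc 1 L, (c₂ * (2:ℝ) ^ (-β * ℓ)) / (N ℓ : ℝ) := by
        refine Finset.sum_le_sum fun ℓ hℓ => ?_
        have h1 := (Finset.mem_Icc.mp hℓ).1
        have h2 : (0:ℝ) < (N ℓ : ℝ) := by exact_mod_cast hN ℓ hℓ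
        exact div_le_div_of_nonneg_right (hvar ℓ h1) h2.le
      linarith
    · -- cost
      have h1 : ∑ ℓ ∈ Finset.Icc 1 L, (N ℓ : ℝ) * C ℓ
          ≤ ∑ ℓ ∈ Finset.Icc 1 L, (N ℓ : ℝ) * (c₃ * (2:ℝ) ^ (γ * ℓ)) :=
        Finset.sum_le_sum fun ℓ hℓ =>
          mul_le_mul_of_nonneg_left (hcost ℓ (Finset.mem_Icc.mp hℓ).1) (Nat.cast_nonneg _)
      have h2 : ∑ ℓ ∈ Finset.Icc 1 L, (N ℓ : ℝ) * (c₃ * (2:ℝ) ^ (γ * ℓ))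
          = c₃ * ∑ ℓ ∈ Finset.Icc 1 L, (N ℓ : ℝ) * (2:ℝ) ^ (γ * ℓ) := by
        rw [Finset.mul_sum]
        exact Finset.sum_congr rfl fun ℓ _ => by ring
      have h3 := mul_le_mul_of_nonneg_left hcostsum hc₃.le
      rw [hg]
      linarith
  rcases lt_trichotomy γ β with hcase | hcase | hcase
  · -- β > γ
    set q := (2:ℝ)^((γ-β)/2) with hq
    have hq0 : 0 < q := Real.rpow_pos_of_pos (by norm_num) _
    have hq1 : q < 1 :=
      Real.rpow_lt_one_of_one_lt_of_neg one_lt_two (by linarith)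
    have hd : (0:ℝ) < 1 - q := by linarith
    have hγα : γ / α ≤ 2 := by
      rw [min_eq_right hcase.le] at hαβγ
      rw [div_le_iff₀ hα]; linarith
    refine ⟨c₃ * (2 * c₂ * (1/(1-q))^2 + g * Cg), ?_, ?_⟩
    · exact mul_pos hc₃ (add_pos
        (mul_pos (mul_pos two_pos hc₂) (pow_pos (div_pos one_pos hd) 2))
        (mul_pos hgpos hCgpos))
    intro ε hε hεe
    obtain ⟨L, N, K, hL1, hN, hKpos, hKeq, hmse, hcost', hLb, hθb⟩ := KEY ε hε hεe
    refine ⟨L, N, hL1, hN, hmse, ?_⟩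
    rw [if_pos hcase]
    have hε1 : ε < 1 := hεe.trans hεe1
    have hKle : K ≤ 1/(1-q) := by
      rw [hKeq, Finset.sum_congr rfl fun ℓ _ => rpow_nat_mul ((γ-β)/2) ℓ]
      exact geom_Icc_le_of_lt_one hq0.le hq1 L
    have hK2 : K^2 ≤ (1/(1-q))^2 := pow_le_pow_left₀ hKpos.le hKle 2
    have h2γL : (2:ℝ) ^ (γ * (L:ℝ)) ≤ Cg * ε ^ (-(γ/α)) := hθb γ hγ.le
    have hexp : ε ^ (-(γ/α)) ≤ ε ^ (-2:ℝ) :=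
      Real.rpow_le_rpow_of_exponent_ge hε hε1.le (by linarith)
    have hεneg2 : (0:ℝ) < ε ^ (-2:ℝ) := Real.rpow_pos_of_pos hε _
    calc ∑ ℓ ∈ Finset.Icc 1 L, (N ℓ : ℝ) * C ℓ
        ≤ c₃ * (2 * ε ^ (-2:ℝ) * c₂ * K^2 + (2:ℝ) ^ (γ * L) * g) := hcost'
      _ ≤ c₃ * (2 * ε ^ (-2:ℝ) * c₂ * (1/(1-q))^2 + (Cg * ε ^ (-2:ℝ)) * g) := by
          apply mul_le_mul_of_nonneg_left _ hc₃.le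
          apply add_le_add
          · exact mul_le_mul_of_nonneg_left hK2 (by positivity)
          · refine mul_le_mul_of_nonneg_right ?_ hgpos.le
            exact h2γL.trans (mul_le_mul_of_nonneg_left hexp hCgpos.le)
      _ = c₃ * (2 * c₂ * (1/(1-q))^2 + g * Cg) * ε ^ (-2:ℝ) := by ring
  · -- β = γ
    subst hcase
    have hlog2 : (0:ℝ) < Real.log 2 := Real.log_pos one_lt_two
    have hBpos : 0 < ((max 0 (Real.log (c₁ * Real.sqrt 2)) + 1)/(α * Real.log 2) + 1) :=
      add_pos_of_nonneg_of_pos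
        (div_nonneg (by positivity) (mul_pos hα hlog2).le) one_pos
    set B := ((max 0 (Real.log (c₁ * Real.sqrt 2)) + 1)/(α * Real.log 2) + 1) with hB
    have hγα : γ / α ≤ 2 := by
      rw [min_self] at hαβγ
      rw [div_le_iff₀ hα]; linarith
    refine ⟨c₃ * (2 * c₂ * B^2 + g * Cg), ?_, ?_⟩
    · exact mul_pos hc₃ (add_pos
        (mul_pos (mul_pos two_pos hc₂) (pow_pos hBpos 2))
        (mul_pos hgpos hCgpos))
    intro ε hε hεe
    obtain ⟨L, N, K, hL1, hN, hKpos, hKeq, hmse, hcost', hLb, hθb⟩ := KEY ε hε hεe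
    refine ⟨L, N, hL1, hN, hmse, ?_⟩
    rw [if_neg (lt_irrefl γ), if_pos rfl]
    have hε1 : ε < 1 := hεe.trans hεe1
    have ht : 1 < -Real.log ε := by
      have h := Real.log_lt_log hε hεe
      rw [Real.log_exp] at h; linarith
    have hKL : K = L := by
      rw [hKeq]
      norm_num [Nat.card_Icc]
    have hK2 : K^2 ≤ B^2 * (Real.log ε)^2 := by
      have h1 : K ≤ B * (-Real.log ε) := by rw [hKL]; exact hLb
      have h2 : K^2 ≤ (B * (-Real.log ε))^2 := pow_le_pow_left₀ hKpos.le h1 2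
      calc K^2 ≤ (B * (-Real.log ε))^2 := h2
        _ = B^2 * (Real.log ε)^2 := by ring
    have h2γL : (2:ℝ) ^ (γ * (L:ℝ)) ≤ Cg * ε ^ (-(γ/α)) := hθb γ hγ.le
    have hexp : ε ^ (-(γ/α)) ≤ ε ^ (-2:ℝ) :=
      Real.rpow_le_rpow_of_exponent_ge hε hε1.le (by linarith)
    have hεneg2 : (0:ℝ) < ε ^ (-2:ℝ) := Real.rpow_pos_of_pos hε _
    have hlog1 : 1 ≤ (Real.log ε)^2 := by nlinarith
    calc ∑ ℓ ∈ Finset.Icc 1 L, (N ℓ : ℝ) * C ℓ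
        ≤ c₃ * (2 * ε ^ (-2:ℝ) * c₂ * K^2 + (2:ℝ) ^ (γ * L) * g) := hcost'
      _ ≤ c₃ * (2 * ε ^ (-2:ℝ) * c₂ * (B^2 * (Real.log ε)^2)
            + (Cg * ε ^ (-2:ℝ) * (Real.log ε)^2) * g) := by
          apply mul_le_mul_of_nonneg_left _ hc₃.le
          apply add_le_add
          · exact mul_le_mul_of_nonneg_left hK2 (by positivity)
          · refine mul_le_mul_of_nonneg_right ?_ hgpos.le
            calc (2:ℝ) ^ (γ * (L:ℝ)) ≤ Cg * ε ^ (-(γ/α)) := h2γL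
              _ ≤ Cg * ε ^ (-2:ℝ) := mul_le_mul_of_nonneg_left hexp hCgpos.le
              _ ≤ Cg * ε ^ (-2:ℝ) * (Real.log ε)^2 := by
                  nlinarith [mul_pos hCgpos hεneg2]
      _ = c₃ * (2 * c₂ * B^2 + g * Cg) * ε ^ (-2:ℝ) * (Real.log ε)^2 := by ring
  · -- β < γ
    set r := (2:ℝ)^((γ-β)/2) with hr
    have hr1 : (1:ℝ) < r :=
      (Real.one_lt_rpow_iff_of_pos (by norm_num)).mpr (Or.inl ⟨one_lt_two, by linarith⟩)
    set s := r/(r-1) with hs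
    have hspos : 0 < s := div_pos (by linarith) (by linarith)
    set Cd := (2:ℝ)^(γ-β) * M^((γ-β)/α) with hCd
    have hCdpos : 0 < Cd :=
      mul_pos (Real.rpow_pos_of_pos (by norm_num) _) (Real.rpow_pos_of_pos hMpos _)
    have hβα : β / α ≤ 2 := by
      rw [min_eq_left hcase.le] at hαβγ
      rw [div_le_iff₀ hα]; linarith
    refine ⟨c₃ * (2 * c₂ * (s^2 * Cd) + g * Cg), ?_, ?_⟩
    · exact mul_pos hc₃ (add_pos
        (mul_pos (mul_pos two_pos hc₂) (mul_pos (pow_pos hspos 2) hCdpos))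
        (mul_pos hgpos hCgpos))
    intro ε hε hεe
    obtain ⟨L, N, K, hL1, hN, hKpos, hKeq, hmse, hcost', hLb, hθb⟩ := KEY ε hε hεe
    refine ⟨L, N, hL1, hN, hmse, ?_⟩
    rw [if_neg (not_lt.mpr hcase.le), if_neg hcase.ne]
    have hε1 : ε < 1 := hεe.trans hεe1
    have hKle : K ≤ r^L * s := by
      rw [hKeq, Finset.sum_congr rfl fun ℓ _ => rpow_nat_mul ((γ-β)/2) ℓ]
      exact geom_Icc_le_of_one_lt hr1 L
    have hrL : (r^L)^2 = (2:ℝ)^((γ-β) * (L:ℝ)) := by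
      rw [hr, ← rpow_nat_mul ((γ-β)/2) L, sq,
        ← Real.rpow_add (by norm_num : (0:ℝ) < 2)]
      congr 1; ring
    have hK2 : K^2 ≤ (2:ℝ)^((γ-β) * (L:ℝ)) * s^2 := by
      have h1 : K^2 ≤ (r^L * s)^2 := pow_le_pow_left₀ hKpos.le hKle 2
      calc K^2 ≤ (r^L * s)^2 := h1
        _ = (r^L)^2 * s^2 := by ring
        _ = (2:ℝ)^((γ-β) * (L:ℝ)) * s^2 := by rw [hrL]
    have hδ : (2:ℝ)^((γ-β) * (L:ℝ)) ≤ Cd * ε ^ (-((γ-β)/α)) := hθb (γ-β) (by linarith)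
    have hmul : ε ^ (-2:ℝ) * ε ^ (-((γ-β)/α)) = ε ^ (-2 - (γ-β)/α) := by
      rw [← Real.rpow_add hε, show (-2:ℝ) + -((γ-β)/α) = -2 - (γ-β)/α from by ring]
    have hexp : ε ^ (-(γ/α)) ≤ ε ^ (-2 - (γ-β)/α) := by
      apply Real.rpow_le_rpow_of_exponent_ge hε hε1.le
      have h1 : γ/α = (γ-β)/α + β/α := by ring
      linarith
    have h2γL : (2:ℝ) ^ (γ * (L:ℝ)) ≤ Cg * ε ^ (-(γ/α)) := hθb γ hγ.le
    have hεneg2 : (0:ℝ) < ε ^ (-2:ℝ) := Real.rpow_pos_of_pos hε _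
    calc ∑ ℓ ∈ Finset.Icc 1 L, (N ℓ : ℝ) * C ℓ
        ≤ c₃ * (2 * ε ^ (-2:ℝ) * c₂ * K^2 + (2:ℝ) ^ (γ * L) * g) := hcost'
      _ ≤ c₃ * (2 * ε ^ (-2:ℝ) * c₂ * ((Cd * ε ^ (-((γ-β)/α))) * s^2)
            + (Cg * ε ^ (-2 - (γ-β)/α)) * g) := by
          apply mul_le_mul_of_nonneg_left _ hc₃.le
          apply add_le_add
          · refine mul_le_mul_of_nonneg_left ?_ (by positivity)
            calc K^2 ≤ (2:ℝ)^((γ-β) * (L:ℝ)) * s^2 := hK2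
              _ ≤ (Cd * ε ^ (-((γ-β)/α))) * s^2 :=
                  mul_le_mul_of_nonneg_right hδ (by positivity)
          · refine mul_le_mul_of_nonneg_right ?_ hgpos.le
            exact h2γL.trans (mul_le_mul_of_nonneg_left hexp hCgpos.le)
      _ = c₃ * (2 * c₂ * (s^2 * Cd) + g * Cg) * ε ^ (-2 - (γ-β)/α) := by
          rw [← hmul]; ring
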